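/- Let u : ℝ → ℤ → ℝ be differentiable in t and satisfy u̇ₙ = (uₙ₊₁ + uₙ)(uₙ + uₙ₋₁)(uₙ₊₂ + uₙ₊₁ − uₙ₋₁ − uₙ₋₂). Define v s n = (−1)ⁿ · u (−s) n. Then v satisfies v̇ₙ = (vₙ₊₁ − vₙ)(vₙ − vₙ₋₁)(vₙ₊₂ − vₙ₊₁ + vₙ₋₁ − vₙ₋₂), where v̇ₙ is the derivative with respect to s. -/

import Mathlib

/-- Transformation T7 relates equation (E12) to equation (E10) with a = b = 0. -/
theorem stmt_12 (u v : ℝ → ℤ → ℝ)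
    (hu : ∀ t n, HasDerivAt (fun s => u s n)
      ((u t (n + 1) + u t n) * (u t n + u t (n - 1)) *
        (u t (n + 2) + u t (n + 1) - u t (n - 1) - u t (n - 2))) t)
    (hv : ∀ s n, v s n = (-1 : ℝ) ^ n * u (-s) n) :
    ∀ s n, HasDerivAt (fun r => v r n)
      ((v s (n + 1) - v s n) * (v s n - v s (n - 1)) *
        (v s (n + 2) - v s (n + 1) + v s (n - 1) - v s (n - 2))) s := by
  intro s n
  have hneg : HasDerivAt (fun r : ℝ => -r) (-1) s := (hasDerivAt_id s).neg
  have key := ((hu (-s) n).comp s hneg).const_mul ((-1 : ℝ) ^ n)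
  have hfun : (fun r => v r n) = fun r => (-1 : ℝ) ^ n * u (-r) n := by
    funext r; exact hv r n
  rw [hfun]
  refine key.congr_deriv ?_
  have h1 : (-1 : ℝ) ^ (n + 1) = -(-1 : ℝ) ^ n := by
    rw [zpow_add₀ (by norm_num : (-1:ℝ) ≠ 0)]; ring
  have h2 : (-1 : ℝ) ^ (n + 2) = (-1 : ℝ) ^ n := by
    rw [zpow_add₀ (by norm_num : (-1:ℝ) ≠ 0)]; norm_num
  have h3 : (-1 : ℝ) ^ (n - 1) = -(-1 : ℝ) ^ n := by
    rw [zpow_sub₀ (by norm_num : (-1:ℝ) ≠ 0)]; simp; ring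
  have h4 : (-1 : ℝ) ^ (n - 2) = (-1 : ℝ) ^ n := by
    rw [zpow_sub₀ (by norm_num : (-1:ℝ) ≠ 0)]; norm_num
  simp only [hv, h1, h2, h3, h4]
  rcases Int.even_or_odd n with h | h
  · rw [h.neg_one_zpow]; ring
  · rw [Odd.neg_one_zpow h]; ring
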